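/- For all integers n ≥ 1 and δ ≥ 2, there exists a sequential schedule of the tree T(n, δ) whose peak memory is at most n + δ. (Combined with the matching lower bound, the optimal sequential peak memory of T(n, δ) is exactly n + δ.) -/

import Mathlib

/-- A finite rooted in-tree: every node has a parent (the root is its own
parent), and a rank function witnesses that following parents strictly
decreases towards the root, so every node has a unique path to the root. -/
structure InTree where
  V : Type
  [fin : Fintype V]
  [deq : DecidableEq V]
  root : V
  parent : V → V
  parent_root : parent root = root
  rk : V → ℕ
  rk_lt : ∀ v, v ≠ root → rk (parent v) < rk v
  rk_root : ∀ v, rk v = 0 → v = root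

attribute [instance] InTree.fin InTree.deq

/-- A schedule of `T` on `p` processors: at most `p` tasks per unit time step,
and every non-root task finishes before its parent starts. -/
def InTree.IsSchedule (T : InTree) (p : ℕ) (t : T.V → ℕ) : Prop :=
  (∀ s : ℕ, (Finset.univ.filter (fun i => t i = s)).card ≤ p) ∧
  (∀ i : T.V, i ≠ T.root → t i + 1 ≤ t (T.parent i))

/-- Makespan of a schedule: `max_i (t i + 1)`. -/
def InTree.makespan (T : InTree) (t : T.V → ℕ) : ℕ :=
  Finset.univ.sup (fun i => t i + 1)

/-- Memory used at step `s`: number of nodes `i` with `t i ≤ s` that are the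
root or whose parent has not finished before step `s`. -/
def InTree.memAt (T : InTree) (t : T.V → ℕ) (s : ℕ) : ℕ :=
  (Finset.univ.filter (fun i : T.V => t i ≤ s ∧ (i = T.root ∨ s ≤ t (T.parent i)))).card

/-- Peak memory of a schedule: maximum memory usage over steps `0 ≤ s < makespan`. -/
def InTree.peakMemory (T : InTree) (t : T.V → ℕ) : ℕ :=
  (Finset.range (T.makespan t)).sup (T.memAt t)


/-- Node set of the tree `T(n, δ)` used in the inapproximability proof:
a root; for each `i < n` a chain `cp^i_1, …, cp^i_{δ-1}` (index `j : Fin (δ-1)`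
represents `cp^i_{j+1}`); for each `cp^i_j` a child `d^i_j`; for each `d^i_j`
its `δ - (j+1) + 1 = δ - j` leaf children; and two extra nodes `b^i_δ`,
`b^i_{δ+1}` below `cp^i_{δ-1}`. -/
abbrev TV (n δ : ℕ) : Type :=
  Unit ⊕ (Fin n × Fin (δ-1)) ⊕ (Fin n × Fin (δ-1)) ⊕
    (Σ q : Fin n × Fin (δ-1), Fin (δ - q.2.val)) ⊕ (Fin n) ⊕ (Fin n)

/-- The tree `T(n, δ)` of the inapproximability proof. -/
def theTree (n δ : ℕ) (hδ : 2 ≤ δ) : InTree where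
  V := TV n δ
  root := Sum.inl ()
  parent := fun v => match v with
    | Sum.inl _ => Sum.inl ()
    | Sum.inr (Sum.inl (i, j)) =>
        if h : j.val = 0 then Sum.inl ()
        else Sum.inr (Sum.inl (i, ⟨j.val - 1, by have := j.isLt; omega⟩))
    | Sum.inr (Sum.inr (Sum.inl (i, j))) => Sum.inr (Sum.inl (i, j))
    | Sum.inr (Sum.inr (Sum.inr (Sum.inl ⟨q, _⟩))) => Sum.inr (Sum.inr (Sum.inl q))
    | Sum.inr (Sum.inr (Sum.inr (Sum.inr (Sum.inl i)))) =>
        Sum.inr (Sum.inl (i, ⟨δ - 2, by omega⟩))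
    | Sum.inr (Sum.inr (Sum.inr (Sum.inr (Sum.inr i)))) =>
        Sum.inr (Sum.inr (Sum.inr (Sum.inr (Sum.inl i))))
  parent_root := rfl
  rk := fun v => match v with
    | Sum.inl _ => 0
    | Sum.inr (Sum.inl (_, j)) => j.val + 1
    | Sum.inr (Sum.inr (Sum.inl (_, j))) => j.val + 2
    | Sum.inr (Sum.inr (Sum.inr (Sum.inl ⟨q, _⟩))) => q.2.val + 3
    | Sum.inr (Sum.inr (Sum.inr (Sum.inr (Sum.inl _)))) => δ
    | Sum.inr (Sum.inr (Sum.inr (Sum.inr (Sum.inr _)))) => δ + 1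
  rk_lt := by
    rintro (u | ⟨i, j⟩ | ⟨i, j⟩ | ⟨q, k⟩ | i | i) h
    · cases u; exact absurd rfl h
    · by_cases h0 : j.val = 0 <;> simp [h0] <;> omega
    · simp
    · simp
    · simp; omega
    · simp
  rk_root := by
    rintro (u | ⟨i, j⟩ | ⟨i, j⟩ | ⟨q, k⟩ | i | i) h
    · cases u; rfl
    · simp at h
    · simp at h
    · simp at h
    · simp at h; omega
    · simp at h

/-- The node `cp^i_{j+1}` of `T(n, δ)`. -/
def cpNode (n δ : ℕ) (hδ : 2 ≤ δ) (i : Fin n) (j : Fin (δ-1)) : (theTree n δ hδ).V :=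
  Sum.inr (Sum.inl (i, j))

/- ============ auxiliary development ============ -/

def Afun (δ : ℕ) : ℕ → ℕ
  | 0 => 0
  | (j+1) => Afun δ j + (δ - j) + 1

def Bval (δ : ℕ) : ℕ := Afun δ (δ - 1)
def Sval (δ : ℕ) : ℕ := Bval δ + δ + 1

lemma Afun_mono (δ : ℕ) : Monotone (Afun δ) :=
  monotone_nat_of_le_succ (fun m => by simp [Afun]; omega)

lemma block_lt (δ : ℕ) {m m' : ℕ} (h : m < m') :
    Afun δ m + (δ - m) + 1 ≤ Afun δ m' := by
  have h2 : Afun δ (m+1) ≤ Afun δ m' := Afun_mono δ h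
  simpa [Afun] using h2

lemma Ad_le (δ : ℕ) {j : ℕ} (h : j < δ - 1) :
    Afun δ j + (δ - j) + 1 ≤ Bval δ := block_lt δ h

lemma mulsep {i1 i2 S : ℕ} :
    (i1 = i2 ∧ i1 * S = i2 * S) ∨ i1*S + S ≤ i2*S ∨ i2*S + S ≤ i1*S := by
  rcases Nat.lt_trichotomy i1 i2 with h | h | h
  · right; left
    have h3 := Nat.mul_le_mul_right S h
    rwa [Nat.succ_mul] at h3
  · exact Or.inl ⟨h, by rw [h]⟩
  · right; right
    have h3 := Nat.mul_le_mul_right S h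
    rwa [Nat.succ_mul] at h3

lemma blocksep (δ : ℕ) {j1 j2 : ℕ} :
    (j1 = j2 ∧ Afun δ j1 = Afun δ j2) ∨
    (j1 < j2 ∧ Afun δ j1 + (δ - j1) + 1 ≤ Afun δ j2) ∨
    (j2 < j1 ∧ Afun δ j2 + (δ - j2) + 1 ≤ Afun δ j1) := by
  rcases Nat.lt_trichotomy j1 j2 with h | h | h
  · exact Or.inr (Or.inl ⟨h, block_lt δ h⟩)
  · exact Or.inl ⟨h, by rw [h]⟩
  · exact Or.inr (Or.inr ⟨h, block_lt δ h⟩)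

lemma below_top {n S : ℕ} (i : Fin n) {e : ℕ} (he : e < S) :
    i.val * S + e < n * S := by
  have h3 : (i.val+1)*S ≤ n*S := Nat.mul_le_mul_right S i.isLt
  rw [Nat.succ_mul] at h3
  omega

def tFun (n δ : ℕ) : TV n δ → ℕ
  | Sum.inl _ => n * Sval δ
  | Sum.inr (Sum.inl (i, j)) => i.val * Sval δ + (Bval δ + (δ - j.val))
  | Sum.inr (Sum.inr (Sum.inl (i, j))) => i.val * Sval δ + (Afun δ j.val + (δ - j.val))
  | Sum.inr (Sum.inr (Sum.inr (Sum.inl ⟨(i, j), k⟩))) => i.val * Sval δ + (Afun δ j.val + k.val)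
  | Sum.inr (Sum.inr (Sum.inr (Sum.inr (Sum.inl i)))) => i.val * Sval δ + (Bval δ + 1)
  | Sum.inr (Sum.inr (Sum.inr (Sum.inr (Sum.inr i)))) => i.val * Sval δ + Bval δ

def phi (n δ s : ℕ) : TV n δ → ℕ ⊕ ℕ
  | Sum.inl _ => Sum.inr 0
  | Sum.inr (Sum.inl (i, j)) =>
      if j.val = 0 then
        (if i.val * Sval δ + (Bval δ + δ) = s then Sum.inr 1 else Sum.inl i.val)
      else Sum.inr (j.val + 1)
  | Sum.inr (Sum.inr (Sum.inl (i, j))) =>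
      if i.val * Sval δ + (Afun δ j.val + (δ - j.val)) = s then Sum.inl i.val
      else Sum.inr j.val
  | Sum.inr (Sum.inr (Sum.inr (Sum.inl ⟨(_, j), k⟩))) => Sum.inr (j.val + k.val)
  | Sum.inr (Sum.inr (Sum.inr (Sum.inr (Sum.inl i)))) => Sum.inl i.val
  | Sum.inr (Sum.inr (Sum.inr (Sum.inr (Sum.inr _)))) => Sum.inr (δ - 1)

section
variable (n δ : ℕ) (hδ : 2 ≤ δ)

-- parent computations
lemma par_cp0 (i : Fin n) (j : Fin (δ-1)) (h : j.val = 0) :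
    (theTree n δ hδ).parent (Sum.inr (Sum.inl (i, j))) = Sum.inl () := by
  show (if h : j.val = 0 then _ else _) = _
  simp [h]
  rfl

lemma par_cp1 (i : Fin n) (j : Fin (δ-1)) (h : ¬ j.val = 0) :
    (theTree n δ hδ).parent (Sum.inr (Sum.inl (i, j))) =
      Sum.inr (Sum.inl (i, ⟨j.val - 1, by have := j.isLt; omega⟩)) := by
  show (if h : j.val = 0 then _ else _) = _
  simp [h]
  rfl

lemma par_d (i : Fin n) (j : Fin (δ-1)) :
    (theTree n δ hδ).parent (Sum.inr (Sum.inr (Sum.inl (i, j)))) = Sum.inr (Sum.inl (i, j)) := rfl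

lemma par_leaf (q : Fin n × Fin (δ-1)) (k : Fin (δ - q.2.val)) :
    (theTree n δ hδ).parent (Sum.inr (Sum.inr (Sum.inr (Sum.inl ⟨q, k⟩)))) =
      Sum.inr (Sum.inr (Sum.inl q)) := rfl

lemma par_b1 (i : Fin n) :
    (theTree n δ hδ).parent (Sum.inr (Sum.inr (Sum.inr (Sum.inr (Sum.inl i))))) =
      Sum.inr (Sum.inl (i, ⟨δ - 2, by omega⟩)) := rfl

lemma par_b2 (i : Fin n) :
    (theTree n δ hδ).parent (Sum.inr (Sum.inr (Sum.inr (Sum.inr (Sum.inr i))))) =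
      Sum.inr (Sum.inr (Sum.inr (Sum.inr (Sum.inl i)))) := rfl

end

def LiveF (n δ s : ℕ) : TV n δ → Prop
  | Sum.inl _ => n * Sval δ ≤ s
  | Sum.inr (Sum.inl (i, j)) =>
      i.val * Sval δ + (Bval δ + (δ - j.val)) ≤ s ∧
      (j.val ≠ 0 → s ≤ i.val * Sval δ + (Bval δ + (δ - (j.val - 1))))
  | Sum.inr (Sum.inr (Sum.inl (i, j))) =>
      i.val * Sval δ + (Afun δ j.val + (δ - j.val)) ≤ s ∧
      s ≤ i.val * Sval δ + (Bval δ + (δ - j.val))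
  | Sum.inr (Sum.inr (Sum.inr (Sum.inl ⟨(i, j), k⟩))) =>
      i.val * Sval δ + (Afun δ j.val + k.val) ≤ s ∧
      s ≤ i.val * Sval δ + (Afun δ j.val + (δ - j.val))
  | Sum.inr (Sum.inr (Sum.inr (Sum.inr (Sum.inl i)))) =>
      i.val * Sval δ + (Bval δ + 1) ≤ s ∧ s ≤ i.val * Sval δ + (Bval δ + 2)
  | Sum.inr (Sum.inr (Sum.inr (Sum.inr (Sum.inr i)))) =>
      i.val * Sval δ + Bval δ ≤ s ∧ s ≤ i.val * Sval δ + (Bval δ + 1)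

lemma mem_filter_aux {α : Type} [Fintype α] {p : α → Prop} {inst : DecidablePred p} {a : α}
    (h : a ∈ @Finset.filter α p inst Finset.univ) : p a :=
  ((@Finset.mem_filter α p inst _ _).mp h).2

section
variable (n δ : ℕ) (hδ : 2 ≤ δ)

lemma liveF_of_mem {s : ℕ} {inst : DecidablePred (fun i : (theTree n δ hδ).V =>
      tFun n δ i ≤ s ∧ (i = (theTree n δ hδ).root ∨ s ≤ tFun n δ ((theTree n δ hδ).parent i)))} :
    ∀ w ∈ @Finset.filter _ (fun i : (theTree n δ hδ).V =>
      tFun n δ i ≤ s ∧ (i = (theTree n δ hδ).root ∨ s ≤ tFun n δ ((theTree n δ hδ).parent i))) inst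
      Finset.univ,
    LiveF n δ s w := by
  intro w hw
  obtain ⟨h1, h2⟩ := mem_filter_aux hw
  rcases w with u | ⟨i, j⟩ | ⟨i, j⟩ | ⟨⟨i, j⟩, k⟩ | i | i
  · exact h1
  · refine ⟨h1, fun hj => ?_⟩
    rcases h2 with h2 | h2
    · simp [theTree] at h2
    · rw [par_cp1 n δ hδ i j hj] at h2
      simpa [tFun] using h2
  · refine ⟨h1, ?_⟩
    rcases h2 with h2 | h2
    · simp [theTree] at h2
    · rw [par_d n δ hδ i j] at h2
      simpa [tFun] using h2
  · refine ⟨h1, ?_⟩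
    rcases h2 with h2 | h2
    · simp [theTree] at h2
    · rw [par_leaf n δ hδ (i, j) k] at h2
      simpa [tFun] using h2
  · refine ⟨h1, ?_⟩
    rcases h2 with h2 | h2
    · simp [theTree] at h2
    · rw [par_b1 n δ hδ i] at h2
      simp only [tFun] at h2
      omega
  · refine ⟨h1, ?_⟩
    rcases h2 with h2 | h2
    · simp [theTree] at h2
    · rw [par_b2 n δ hδ i] at h2
      simpa [tFun] using h2

include hδ in
lemma tFun_inj : Function.Injective (tFun n δ) := by
  have hd : 2 ≤ δ := hδ
  have hS : Sval δ = Bval δ + δ + 1 := rfl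
  rintro (u | ⟨i1, j1⟩ | ⟨i1, j1⟩ | ⟨⟨i1, j1⟩, k1⟩ | i1 | i1)
         (v | ⟨i2, j2⟩ | ⟨i2, j2⟩ | ⟨⟨i2, j2⟩, k2⟩ | i2 | i2) h <;>
    simp only [tFun] at h
  -- R row
  · rfl
  · exfalso
    have hj2 := j2.isLt
    have := below_top (n := n) (S := Sval δ) i2 (e := Bval δ + (δ - j2.val)) (by omega)
    omega
  · exfalso
    have hd2 := Ad_le δ j2.isLt
    have := below_top (n := n) (S := Sval δ) i2 (e := Afun δ j2.val + (δ - j2.val)) (by omega)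
    omega
  · exfalso
    have hd2 := Ad_le δ j2.isLt
    have hk2 : k2.val < δ - j2.val := k2.isLt
    have := below_top (n := n) (S := Sval δ) i2 (e := Afun δ j2.val + k2.val) (by omega)
    omega
  · exfalso
    have := below_top (n := n) (S := Sval δ) i2 (e := Bval δ + 1) (by omega)
    omega
  · exfalso
    have := below_top (n := n) (S := Sval δ) i2 (e := Bval δ) (by omega)
    omega
  -- C row
  · exfalso
    have hj1 := j1.isLt
    have := below_top (n := n) (S := Sval δ) i1 (e := Bval δ + (δ - j1.val)) (by omega)
    omega
  · have hj1 := j1.isLt; have hj2 := j2.isLt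
    rcases mulsep (i1 := i1.val) (i2 := i2.val) (S := Sval δ) with ⟨hi, hi'⟩ | hi | hi
    · have hI : i1 = i2 := Fin.ext hi; subst hI
      have hJ : j1 = j2 := Fin.ext (by omega); subst hJ; rfl
    · exfalso; omega
    · exfalso; omega
  · exfalso
    have hj1 := j1.isLt; have hd2 := Ad_le δ j2.isLt
    rcases mulsep (i1 := i1.val) (i2 := i2.val) (S := Sval δ) with ⟨hi, hi'⟩ | hi | hi <;> omega
  · exfalso
    have hj1 := j1.isLt; have hd2 := Ad_le δ j2.isLt; have hk2 : k2.val < δ - j2.val := k2.isLt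
    rcases mulsep (i1 := i1.val) (i2 := i2.val) (S := Sval δ) with ⟨hi, hi'⟩ | hi | hi <;> omega
  · exfalso
    have hj1 := j1.isLt
    rcases mulsep (i1 := i1.val) (i2 := i2.val) (S := Sval δ) with ⟨hi, hi'⟩ | hi | hi <;> omega
  · exfalso
    have hj1 := j1.isLt
    rcases mulsep (i1 := i1.val) (i2 := i2.val) (S := Sval δ) with ⟨hi, hi'⟩ | hi | hi <;> omega
  -- D row
  · exfalso
    have hd1 := Ad_le δ j1.isLt
    have := below_top (n := n) (S := Sval δ) i1 (e := Afun δ j1.val + (δ - j1.val)) (by omega)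
    omega
  · exfalso
    have hj2 := j2.isLt; have hd1 := Ad_le δ j1.isLt
    rcases mulsep (i1 := i1.val) (i2 := i2.val) (S := Sval δ) with ⟨hi, hi'⟩ | hi | hi <;> omega
  · have hd1 := Ad_le δ j1.isLt; have hd2 := Ad_le δ j2.isLt
    rcases mulsep (i1 := i1.val) (i2 := i2.val) (S := Sval δ) with ⟨hi, hi'⟩ | hi | hi
    · have hI : i1 = i2 := Fin.ext hi; subst hI
      rcases blocksep δ (j1 := j1.val) (j2 := j2.val) with ⟨hj, hj'⟩ | ⟨hj, hj'⟩ | ⟨hj, hj'⟩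
      · have hJ : j1 = j2 := Fin.ext hj; subst hJ; rfl
      · exfalso; omega
      · exfalso; omega
    · exfalso; omega
    · exfalso; omega
  · have hd1 := Ad_le δ j1.isLt; have hd2 := Ad_le δ j2.isLt; have hk2 : k2.val < δ - j2.val := k2.isLt
    exfalso
    rcases mulsep (i1 := i1.val) (i2 := i2.val) (S := Sval δ) with ⟨hi, hi'⟩ | hi | hi
    · rcases blocksep δ (j1 := j1.val) (j2 := j2.val) with ⟨hj, hj'⟩ | ⟨hj, hj'⟩ | ⟨hj, hj'⟩ <;> omega
    · omega
    · omega
  · exfalso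
    have hd1 := Ad_le δ j1.isLt
    rcases mulsep (i1 := i1.val) (i2 := i2.val) (S := Sval δ) with ⟨hi, hi'⟩ | hi | hi <;> omega
  · exfalso
    have hd1 := Ad_le δ j1.isLt
    rcases mulsep (i1 := i1.val) (i2 := i2.val) (S := Sval δ) with ⟨hi, hi'⟩ | hi | hi <;> omega
  -- L row
  · exfalso
    have hd1 := Ad_le δ j1.isLt; have hk1 : k1.val < δ - j1.val := k1.isLt
    have := below_top (n := n) (S := Sval δ) i1 (e := Afun δ j1.val + k1.val) (by omega)
    omega
  · exfalso
    have hj2 := j2.isLt; have hd1 := Ad_le δ j1.isLt; have hk1 : k1.val < δ - j1.val := k1.isLt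
    rcases mulsep (i1 := i1.val) (i2 := i2.val) (S := Sval δ) with ⟨hi, hi'⟩ | hi | hi <;> omega
  · have hd1 := Ad_le δ j1.isLt; have hd2 := Ad_le δ j2.isLt; have hk1 : k1.val < δ - j1.val := k1.isLt
    exfalso
    rcases mulsep (i1 := i1.val) (i2 := i2.val) (S := Sval δ) with ⟨hi, hi'⟩ | hi | hi
    · rcases blocksep δ (j1 := j1.val) (j2 := j2.val) with ⟨hj, hj'⟩ | ⟨hj, hj'⟩ | ⟨hj, hj'⟩ <;> omega
    · omega
    · omega
  · have hd1 := Ad_le δ j1.isLt; have hd2 := Ad_le δ j2.isLt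
    have hk1 : k1.val < δ - j1.val := k1.isLt; have hk2 : k2.val < δ - j2.val := k2.isLt
    rcases mulsep (i1 := i1.val) (i2 := i2.val) (S := Sval δ) with ⟨hi, hi'⟩ | hi | hi
    · have hI : i1 = i2 := Fin.ext hi; subst hI
      rcases blocksep δ (j1 := j1.val) (j2 := j2.val) with ⟨hj, hj'⟩ | ⟨hj, hj'⟩ | ⟨hj, hj'⟩
      · have hJ : j1 = j2 := Fin.ext hj; subst hJ
        have hK : k1 = k2 := Fin.ext (by omega); subst hK; rfl
      · exfalso; omega
      · exfalso; omega
    · exfalso; omega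
    · exfalso; omega
  · exfalso
    have hd1 := Ad_le δ j1.isLt; have hk1 : k1.val < δ - j1.val := k1.isLt
    rcases mulsep (i1 := i1.val) (i2 := i2.val) (S := Sval δ) with ⟨hi, hi'⟩ | hi | hi <;> omega
  · exfalso
    have hd1 := Ad_le δ j1.isLt; have hk1 : k1.val < δ - j1.val := k1.isLt
    rcases mulsep (i1 := i1.val) (i2 := i2.val) (S := Sval δ) with ⟨hi, hi'⟩ | hi | hi <;> omega
  -- B1 row
  · exfalso
    have := below_top (n := n) (S := Sval δ) i1 (e := Bval δ + 1) (by omega)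
    omega
  · exfalso
    have hj2 := j2.isLt
    rcases mulsep (i1 := i1.val) (i2 := i2.val) (S := Sval δ) with ⟨hi, hi'⟩ | hi | hi <;> omega
  · exfalso
    have hd2 := Ad_le δ j2.isLt
    rcases mulsep (i1 := i1.val) (i2 := i2.val) (S := Sval δ) with ⟨hi, hi'⟩ | hi | hi <;> omega
  · exfalso
    have hd2 := Ad_le δ j2.isLt; have hk2 : k2.val < δ - j2.val := k2.isLt
    rcases mulsep (i1 := i1.val) (i2 := i2.val) (S := Sval δ) with ⟨hi, hi'⟩ | hi | hi <;> omega
  · rcases mulsep (i1 := i1.val) (i2 := i2.val) (S := Sval δ) with ⟨hi, hi'⟩ | hi | hi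
    · have hI : i1 = i2 := Fin.ext hi; subst hI; rfl
    · exfalso; omega
    · exfalso; omega
  · exfalso
    rcases mulsep (i1 := i1.val) (i2 := i2.val) (S := Sval δ) with ⟨hi, hi'⟩ | hi | hi <;> omega
  -- B2 row
  · exfalso
    have := below_top (n := n) (S := Sval δ) i1 (e := Bval δ) (by omega)
    omega
  · exfalso
    have hj2 := j2.isLt
    rcases mulsep (i1 := i1.val) (i2 := i2.val) (S := Sval δ) with ⟨hi, hi'⟩ | hi | hi <;> omega
  · exfalso
    have hd2 := Ad_le δ j2.isLt
    rcases mulsep (i1 := i1.val) (i2 := i2.val) (S := Sval δ) with ⟨hi, hi'⟩ | hi | hi <;> omega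
  · exfalso
    have hd2 := Ad_le δ j2.isLt; have hk2 : k2.val < δ - j2.val := k2.isLt
    rcases mulsep (i1 := i1.val) (i2 := i2.val) (S := Sval δ) with ⟨hi, hi'⟩ | hi | hi <;> omega
  · exfalso
    rcases mulsep (i1 := i1.val) (i2 := i2.val) (S := Sval δ) with ⟨hi, hi'⟩ | hi | hi <;> omega
  · rcases mulsep (i1 := i1.val) (i2 := i2.val) (S := Sval δ) with ⟨hi, hi'⟩ | hi | hi
    · have hI : i1 = i2 := Fin.ext hi; subst hI; rfl
    · exfalso; omega
    · exfalso; omega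

end

section
variable (n δ : ℕ) (hδ : 2 ≤ δ)

include hδ in
lemma memBound (s : ℕ) : (theTree n δ hδ).memAt (tFun n δ) s ≤ n + δ := by
  have h2δ : 2 ≤ δ := hδ
  have hS : Sval δ = Bval δ + δ + 1 := rfl
  unfold InTree.memAt
  have hcard : ((Finset.range n).disjSum (Finset.range δ)).card = n + δ := by
    simp
  rw [← hcard]
  apply Finset.card_le_card_of_injOn (phi n δ s)
  · rintro (u | ⟨i, j⟩ | ⟨i, j⟩ | ⟨⟨i, j⟩, k⟩ | i | i) _hw <;> simp only [phi]
    · simp; omega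
    · split_ifs
      · simp; omega
      · simp [i.isLt]
      · have := j.isLt; simp; omega
    · split_ifs
      · simp [i.isLt]
      · have := j.isLt; simp; omega
    · have hk : k.val < δ - j.val := k.isLt
      simp; omega
    · simp [i.isLt]
    · simp; omega
  · intro u hu v hv hphi
    have Hu := liveF_of_mem n δ hδ u (Finset.mem_coe.mp hu)
    have Hv := liveF_of_mem n δ hδ v (Finset.mem_coe.mp hv)
    clear hu hv
    rcases u with u | ⟨i1, j1⟩ | ⟨i1, j1⟩ | ⟨⟨i1, j1⟩, k1⟩ | i1 | i1 <;>
      rcases v with v | ⟨i2, j2⟩ | ⟨i2, j2⟩ | ⟨⟨i2, j2⟩, k2⟩ | i2 | i2 <;>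
      simp only [LiveF] at Hu Hv <;>
      simp only [phi] at hphi
    -- (1,1) R-R
    · exact congrArg Sum.inl (Subsingleton.elim u v)
    -- (1,2) R-C
    · by_cases e2 : j2.val = 0
      · rw [if_pos e2] at hphi
        by_cases f2 : i2.val * Sval δ + (Bval δ + δ) = s
        · rw [if_pos f2] at hphi
          exfalso; simp only [Sum.inr.injEq] at hphi; omega
        · rw [if_neg f2] at hphi; exact nomatch hphi
      · rw [if_neg e2] at hphi
        exfalso; simp only [Sum.inr.injEq] at hphi; omega
    -- (1,3) R-D
    · by_cases f2 : i2.val * Sval δ + (Afun δ j2.val + (δ - j2.val)) = s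
      · rw [if_pos f2] at hphi; exact nomatch hphi
      · rw [if_neg f2] at hphi
        exfalso
        have := below_top (n := n) (S := Sval δ) i2 (e := Bval δ + (δ - j2.val)) (by omega)
        omega
    -- (1,4) R-L
    · exfalso
      have hd2 := Ad_le δ j2.isLt
      have := below_top (n := n) (S := Sval δ) i2 (e := Afun δ j2.val + (δ - j2.val)) (by omega)
      omega
    -- (1,5) R-B1
    · exact nomatch hphi
    -- (1,6) R-B2
    · exfalso
      have := below_top (n := n) (S := Sval δ) i2 (e := Bval δ + 1) (by omega)
      omega
    -- (2,1) C-R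
    · by_cases e1 : j1.val = 0
      · rw [if_pos e1] at hphi
        by_cases f1 : i1.val * Sval δ + (Bval δ + δ) = s
        · rw [if_pos f1] at hphi
          exfalso; simp only [Sum.inr.injEq] at hphi; omega
        · rw [if_neg f1] at hphi; exact nomatch hphi
      · rw [if_neg e1] at hphi
        exfalso; simp only [Sum.inr.injEq] at hphi; omega
    -- (2,2) C-C
    · have hj1 := j1.isLt; have hj2 := j2.isLt
      by_cases e1 : j1.val = 0
      · rw [if_pos e1] at hphi
        by_cases f1 : i1.val * Sval δ + (Bval δ + δ) = s
        · rw [if_pos f1] at hphi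
          by_cases e2 : j2.val = 0
          · rw [if_pos e2] at hphi
            by_cases f2 : i2.val * Sval δ + (Bval δ + δ) = s
            · rcases mulsep (i1 := i1.val) (i2 := i2.val) (S := Sval δ) with ⟨hi, hi'⟩ | hi | hi
              · have hI : i1 = i2 := Fin.ext hi; subst hI
                have hJ : j1 = j2 := Fin.ext (by omega); subst hJ; rfl
              · exfalso; omega
              · exfalso; omega
            · rw [if_neg f2] at hphi; exact nomatch hphi
          · rw [if_neg e2] at hphi
            exfalso; simp only [Sum.inr.injEq] at hphi; omega
        · rw [if_neg f1] at hphi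
          by_cases e2 : j2.val = 0
          · rw [if_pos e2] at hphi
            by_cases f2 : i2.val * Sval δ + (Bval δ + δ) = s
            · rw [if_pos f2] at hphi; exact nomatch hphi
            · rw [if_neg f2] at hphi
              simp only [Sum.inl.injEq] at hphi
              have hI : i1 = i2 := Fin.ext hphi; subst hI
              have hJ : j1 = j2 := Fin.ext (by omega); subst hJ; rfl
          · rw [if_neg e2] at hphi; exact nomatch hphi
      · rw [if_neg e1] at hphi
        by_cases e2 : j2.val = 0
        · rw [if_pos e2] at hphi
          by_cases f2 : i2.val * Sval δ + (Bval δ + δ) = s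
          · rw [if_pos f2] at hphi
            exfalso; simp only [Sum.inr.injEq] at hphi; omega
          · rw [if_neg f2] at hphi; exact nomatch hphi
        · rw [if_neg e2] at hphi
          simp only [Sum.inr.injEq] at hphi
          have u1 := Hu.2 e1; have v1 := Hv.2 e2
          rcases mulsep (i1 := i1.val) (i2 := i2.val) (S := Sval δ) with ⟨hi, hi'⟩ | hi | hi
          · have hI : i1 = i2 := Fin.ext hi; subst hI
            have hJ : j1 = j2 := Fin.ext (by omega); subst hJ; rfl
          · exfalso; omega
          · exfalso; omega
    -- (2,3) C-D
    · have hj1 := j1.isLt; have hd2 := Ad_le δ j2.isLt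
      by_cases e1 : j1.val = 0
      · rw [if_pos e1] at hphi
        by_cases f1 : i1.val * Sval δ + (Bval δ + δ) = s
        · rw [if_pos f1] at hphi
          by_cases f2 : i2.val * Sval δ + (Afun δ j2.val + (δ - j2.val)) = s
          · rw [if_pos f2] at hphi; exact nomatch hphi
          · rw [if_neg f2] at hphi
            simp only [Sum.inr.injEq] at hphi
            exfalso
            rcases mulsep (i1 := i1.val) (i2 := i2.val) (S := Sval δ) with ⟨hi, hi'⟩ | hi | hi <;> omega
        · rw [if_neg f1] at hphi
          by_cases f2 : i2.val * Sval δ + (Afun δ j2.val + (δ - j2.val)) = s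
          · rw [if_pos f2] at hphi
            simp only [Sum.inl.injEq] at hphi
            have hI : i1 = i2 := Fin.ext hphi; subst hI
            exfalso; omega
          · rw [if_neg f2] at hphi; exact nomatch hphi
      · rw [if_neg e1] at hphi
        have u1 := Hu.2 e1
        by_cases f2 : i2.val * Sval δ + (Afun δ j2.val + (δ - j2.val)) = s
        · rw [if_pos f2] at hphi; exact nomatch hphi
        · rw [if_neg f2] at hphi
          simp only [Sum.inr.injEq] at hphi
          exfalso
          rcases mulsep (i1 := i1.val) (i2 := i2.val) (S := Sval δ) with ⟨hi, hi'⟩ | hi | hi <;> omega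
    -- (2,4) C-L
    · have hj1 := j1.isLt; have hd2 := Ad_le δ j2.isLt
      have hk2 : k2.val < δ - j2.val := k2.isLt
      by_cases e1 : j1.val = 0
      · rw [if_pos e1] at hphi
        by_cases f1 : i1.val * Sval δ + (Bval δ + δ) = s
        · rw [if_pos f1] at hphi
          simp only [Sum.inr.injEq] at hphi
          exfalso
          rcases mulsep (i1 := i1.val) (i2 := i2.val) (S := Sval δ) with ⟨hi, hi'⟩ | hi | hi <;> omega
        · rw [if_neg f1] at hphi; exact nomatch hphi
      · rw [if_neg e1] at hphi
        have u1 := Hu.2 e1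
        simp only [Sum.inr.injEq] at hphi
        exfalso
        rcases mulsep (i1 := i1.val) (i2 := i2.val) (S := Sval δ) with ⟨hi, hi'⟩ | hi | hi <;> omega
    -- (2,5) C-B1
    · have hj1 := j1.isLt
      by_cases e1 : j1.val = 0
      · rw [if_pos e1] at hphi
        by_cases f1 : i1.val * Sval δ + (Bval δ + δ) = s
        · rw [if_pos f1] at hphi; exact nomatch hphi
        · rw [if_neg f1] at hphi
          simp only [Sum.inl.injEq] at hphi
          have hI : i1 = i2 := Fin.ext hphi; subst hI
          exfalso; omega
      · rw [if_neg e1] at hphi; exact nomatch hphi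
    -- (2,6) C-B2
    · have hj1 := j1.isLt
      by_cases e1 : j1.val = 0
      · rw [if_pos e1] at hphi
        by_cases f1 : i1.val * Sval δ + (Bval δ + δ) = s
        · rw [if_pos f1] at hphi
          exfalso
          rcases mulsep (i1 := i1.val) (i2 := i2.val) (S := Sval δ) with ⟨hi, hi'⟩ | hi | hi <;> omega
        · rw [if_neg f1] at hphi; exact nomatch hphi
      · rw [if_neg e1] at hphi
        simp only [Sum.inr.injEq] at hphi
        have u1 := Hu.2 e1
        exfalso
        rcases mulsep (i1 := i1.val) (i2 := i2.val) (S := Sval δ) with ⟨hi, hi'⟩ | hi | hi <;> omega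
    -- (3,1) D-R
    · by_cases f1 : i1.val * Sval δ + (Afun δ j1.val + (δ - j1.val)) = s
      · rw [if_pos f1] at hphi; exact nomatch hphi
      · rw [if_neg f1] at hphi
        exfalso
        have := below_top (n := n) (S := Sval δ) i1 (e := Bval δ + (δ - j1.val)) (by omega)
        omega
    -- (3,2) D-C
    · have hj2 := j2.isLt; have hd1 := Ad_le δ j1.isLt
      by_cases f1 : i1.val * Sval δ + (Afun δ j1.val + (δ - j1.val)) = s
      · rw [if_pos f1] at hphi
        by_cases e2 : j2.val = 0
        · rw [if_pos e2] at hphi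
          by_cases f2 : i2.val * Sval δ + (Bval δ + δ) = s
          · rw [if_pos f2] at hphi; exact nomatch hphi
          · rw [if_neg f2] at hphi
            simp only [Sum.inl.injEq] at hphi
            have hI : i1 = i2 := Fin.ext hphi; subst hI
            exfalso; omega
        · rw [if_neg e2] at hphi; exact nomatch hphi
      · rw [if_neg f1] at hphi
        by_cases e2 : j2.val = 0
        · rw [if_pos e2] at hphi
          by_cases f2 : i2.val * Sval δ + (Bval δ + δ) = s
          · rw [if_pos f2] at hphi
            simp only [Sum.inr.injEq] at hphi
            exfalso
            rcases mulsep (i1 := i1.val) (i2 := i2.val) (S := Sval δ) with ⟨hi, hi'⟩ | hi | hi <;> omega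
          · rw [if_neg f2] at hphi; exact nomatch hphi
        · rw [if_neg e2] at hphi
          simp only [Sum.inr.injEq] at hphi
          have v1 := Hv.2 e2
          exfalso
          rcases mulsep (i1 := i1.val) (i2 := i2.val) (S := Sval δ) with ⟨hi, hi'⟩ | hi | hi <;> omega
    -- (3,3) D-D
    · have hd1 := Ad_le δ j1.isLt; have hd2 := Ad_le δ j2.isLt
      by_cases f1 : i1.val * Sval δ + (Afun δ j1.val + (δ - j1.val)) = s
      · rw [if_pos f1] at hphi
        by_cases f2 : i2.val * Sval δ + (Afun δ j2.val + (δ - j2.val)) = s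
        · rw [if_pos f2] at hphi
          simp only [Sum.inl.injEq] at hphi
          have hI : i1 = i2 := Fin.ext hphi; subst hI
          rcases blocksep δ (j1 := j1.val) (j2 := j2.val) with ⟨hj, hj'⟩ | ⟨hj, hj'⟩ | ⟨hj, hj'⟩
          · have hJ : j1 = j2 := Fin.ext hj; subst hJ; rfl
          · exfalso; omega
          · exfalso; omega
        · rw [if_neg f2] at hphi; exact nomatch hphi
      · rw [if_neg f1] at hphi
        by_cases f2 : i2.val * Sval δ + (Afun δ j2.val + (δ - j2.val)) = s
        · rw [if_pos f2] at hphi; exact nomatch hphi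
        · rw [if_neg f2] at hphi
          simp only [Sum.inr.injEq] at hphi
          rcases mulsep (i1 := i1.val) (i2 := i2.val) (S := Sval δ) with ⟨hi, hi'⟩ | hi | hi
          · have hI : i1 = i2 := Fin.ext hi; subst hI
            have hJ : j1 = j2 := Fin.ext hphi; subst hJ; rfl
          · exfalso; omega
          · exfalso; omega
    -- (3,4) D-L
    · have hd1 := Ad_le δ j1.isLt; have hd2 := Ad_le δ j2.isLt
      have hk2 : k2.val < δ - j2.val := k2.isLt
      by_cases f1 : i1.val * Sval δ + (Afun δ j1.val + (δ - j1.val)) = s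
      · rw [if_pos f1] at hphi; exact nomatch hphi
      · rw [if_neg f1] at hphi
        simp only [Sum.inr.injEq] at hphi
        exfalso
        rcases mulsep (i1 := i1.val) (i2 := i2.val) (S := Sval δ) with ⟨hi, hi'⟩ | hi | hi
        · rcases blocksep δ (j1 := j1.val) (j2 := j2.val) with ⟨hj, hj'⟩ | ⟨hj, hj'⟩ | ⟨hj, hj'⟩ <;> omega
        · omega
        · omega
    -- (3,5) D-B1
    · have hd1 := Ad_le δ j1.isLt
      by_cases f1 : i1.val * Sval δ + (Afun δ j1.val + (δ - j1.val)) = s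
      · rw [if_pos f1] at hphi
        simp only [Sum.inl.injEq] at hphi
        have hI : i1 = i2 := Fin.ext hphi; subst hI
        exfalso; omega
      · rw [if_neg f1] at hphi; exact nomatch hphi
    -- (3,6) D-B2
    · have hj1 := j1.isLt
      by_cases f1 : i1.val * Sval δ + (Afun δ j1.val + (δ - j1.val)) = s
      · rw [if_pos f1] at hphi; exact nomatch hphi
      · rw [if_neg f1] at hphi
        simp only [Sum.inr.injEq] at hphi
        exfalso; omega
    -- (4,1) L-R
    · exfalso
      have hd1 := Ad_le δ j1.isLt
      have := below_top (n := n) (S := Sval δ) i1 (e := Afun δ j1.val + (δ - j1.val)) (by omega)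
      omega
    -- (4,2) L-C
    · have hj2 := j2.isLt; have hd1 := Ad_le δ j1.isLt
      have hk1 : k1.val < δ - j1.val := k1.isLt
      by_cases e2 : j2.val = 0
      · rw [if_pos e2] at hphi
        by_cases f2 : i2.val * Sval δ + (Bval δ + δ) = s
        · rw [if_pos f2] at hphi
          simp only [Sum.inr.injEq] at hphi
          exfalso
          rcases mulsep (i1 := i1.val) (i2 := i2.val) (S := Sval δ) with ⟨hi, hi'⟩ | hi | hi <;> omega
        · rw [if_neg f2] at hphi; exact nomatch hphi
      · rw [if_neg e2] at hphi
        simp only [Sum.inr.injEq] at hphi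
        have v1 := Hv.2 e2
        exfalso
        rcases mulsep (i1 := i1.val) (i2 := i2.val) (S := Sval δ) with ⟨hi, hi'⟩ | hi | hi <;> omega
    -- (4,3) L-D
    · have hd1 := Ad_le δ j1.isLt; have hd2 := Ad_le δ j2.isLt
      have hk1 : k1.val < δ - j1.val := k1.isLt
      by_cases f2 : i2.val * Sval δ + (Afun δ j2.val + (δ - j2.val)) = s
      · rw [if_pos f2] at hphi; exact nomatch hphi
      · rw [if_neg f2] at hphi
        simp only [Sum.inr.injEq] at hphi
        exfalso
        rcases mulsep (i1 := i1.val) (i2 := i2.val) (S := Sval δ) with ⟨hi, hi'⟩ | hi | hi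
        · rcases blocksep δ (j1 := j1.val) (j2 := j2.val) with ⟨hj, hj'⟩ | ⟨hj, hj'⟩ | ⟨hj, hj'⟩ <;> omega
        · omega
        · omega
    -- (4,4) L-L
    · have hd1 := Ad_le δ j1.isLt; have hd2 := Ad_le δ j2.isLt
      have hk1 : k1.val < δ - j1.val := k1.isLt
      have hk2 : k2.val < δ - j2.val := k2.isLt
      simp only [Sum.inr.injEq] at hphi
      rcases mulsep (i1 := i1.val) (i2 := i2.val) (S := Sval δ) with ⟨hi, hi'⟩ | hi | hi
      · have hI : i1 = i2 := Fin.ext hi; subst hI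
        rcases blocksep δ (j1 := j1.val) (j2 := j2.val) with ⟨hj, hj'⟩ | ⟨hj, hj'⟩ | ⟨hj, hj'⟩
        · have hJ : j1 = j2 := Fin.ext hj; subst hJ
          have hK : k1 = k2 := Fin.ext (by omega); subst hK; rfl
        · exfalso; omega
        · exfalso; omega
      · exfalso; omega
      · exfalso; omega
    -- (4,5) L-B1
    · exact nomatch hphi
    -- (4,6) L-B2
    · have hd1 := Ad_le δ j1.isLt
      have hk1 : k1.val < δ - j1.val := k1.isLt
      simp only [Sum.inr.injEq] at hphi
      exfalso
      rcases mulsep (i1 := i1.val) (i2 := i2.val) (S := Sval δ) with ⟨hi, hi'⟩ | hi | hi <;> omega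
    -- (5,1) B1-R
    · exact nomatch hphi
    -- (5,2) B1-C
    · have hj2 := j2.isLt
      by_cases e2 : j2.val = 0
      · rw [if_pos e2] at hphi
        by_cases f2 : i2.val * Sval δ + (Bval δ + δ) = s
        · rw [if_pos f2] at hphi; exact nomatch hphi
        · rw [if_neg f2] at hphi
          simp only [Sum.inl.injEq] at hphi
          have hI : i1 = i2 := Fin.ext hphi; subst hI
          exfalso; omega
      · rw [if_neg e2] at hphi; exact nomatch hphi
    -- (5,3) B1-D
    · have hd2 := Ad_le δ j2.isLt
      by_cases f2 : i2.val * Sval δ + (Afun δ j2.val + (δ - j2.val)) = s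
      · rw [if_pos f2] at hphi
        simp only [Sum.inl.injEq] at hphi
        have hI : i1 = i2 := Fin.ext hphi; subst hI
        exfalso; omega
      · rw [if_neg f2] at hphi; exact nomatch hphi
    -- (5,4) B1-L
    · exact nomatch hphi
    -- (5,5) B1-B1
    · simp only [Sum.inl.injEq] at hphi
      have hI : i1 = i2 := Fin.ext hphi; subst hI; rfl
    -- (5,6) B1-B2
    · exact nomatch hphi
    -- (6,1) B2-R
    · simp only [Sum.inr.injEq] at hphi
      exfalso; omega
    -- (6,2) B2-C
    · have hj2 := j2.isLt
      by_cases e2 : j2.val = 0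
      · rw [if_pos e2] at hphi
        by_cases f2 : i2.val * Sval δ + (Bval δ + δ) = s
        · rw [if_pos f2] at hphi
          simp only [Sum.inr.injEq] at hphi
          exfalso
          rcases mulsep (i1 := i1.val) (i2 := i2.val) (S := Sval δ) with ⟨hi, hi'⟩ | hi | hi <;> omega
        · rw [if_neg f2] at hphi; exact nomatch hphi
      · rw [if_neg e2] at hphi
        simp only [Sum.inr.injEq] at hphi
        have v1 := Hv.2 e2
        exfalso
        rcases mulsep (i1 := i1.val) (i2 := i2.val) (S := Sval δ) with ⟨hi, hi'⟩ | hi | hi <;> omega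
    -- (6,3) B2-D
    · have hj2 := j2.isLt
      by_cases f2 : i2.val * Sval δ + (Afun δ j2.val + (δ - j2.val)) = s
      · rw [if_pos f2] at hphi; exact nomatch hphi
      · rw [if_neg f2] at hphi
        simp only [Sum.inr.injEq] at hphi
        exfalso; omega
    -- (6,4) B2-L
    · have hd2 := Ad_le δ j2.isLt
      have hk2 : k2.val < δ - j2.val := k2.isLt
      simp only [Sum.inr.injEq] at hphi
      exfalso
      rcases mulsep (i1 := i1.val) (i2 := i2.val) (S := Sval δ) with ⟨hi, hi'⟩ | hi | hi <;> omega
    -- (6,5) B2-B1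
    · exact nomatch hphi
    -- (6,6) B2-B2
    · rcases mulsep (i1 := i1.val) (i2 := i2.val) (S := Sval δ) with ⟨hi, hi'⟩ | hi | hi
      · have hI : i1 = i2 := Fin.ext hi; subst hI; rfl
      · exfalso; omega
      · exfalso; omega

end

/-- There is a sequential schedule (one processor) of `T(n, δ)` whose peak
memory is at most `n + δ`. -/
theorem stmt7 (n δ : ℕ) (hn : 1 ≤ n) (hδ : 2 ≤ δ) :
    ∃ t : (theTree n δ hδ).V → ℕ,
      (theTree n δ hδ).IsSchedule 1 t ∧ (theTree n δ hδ).peakMemory t ≤ n + δ := by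
  have hS : Sval δ = Bval δ + δ + 1 := rfl
  refine ⟨tFun n δ, ⟨?_, ?_⟩, ?_⟩
  · intro s
    rw [Finset.card_le_one]
    intro a ha b hb
    have ha' : tFun n δ a = s := mem_filter_aux (p := fun i => tFun n δ i = s) ha
    have hb' : tFun n δ b = s := mem_filter_aux (p := fun i => tFun n δ i = s) hb
    exact tFun_inj n δ hδ (ha'.trans hb'.symm)
  · rintro (u | ⟨i, j⟩ | ⟨i, j⟩ | ⟨⟨i, j⟩, k⟩ | i | i) hroot
    · cases u; exact absurd rfl hroot
    · by_cases e : j.val = 0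
      · rw [par_cp0 n δ hδ i j e]
        simp only [tFun]
        have h3 : (i.val+1) * Sval δ ≤ n * Sval δ := Nat.mul_le_mul_right _ i.isLt
        rw [Nat.succ_mul] at h3
        omega
      · rw [par_cp1 n δ hδ i j e]
        simp only [tFun]
        have hj := j.isLt
        omega
    · rw [par_d n δ hδ i j]
      simp only [tFun]
      have hd := Ad_le δ j.isLt
      omega
    · rw [par_leaf n δ hδ (i, j) k]
      simp only [tFun]
      have hk : k.val < δ - j.val := k.isLt
      omega
    · rw [par_b1 n δ hδ i]
      simp only [tFun]
      omega
    · rw [par_b2 n δ hδ i]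
      simp only [tFun]
      omega
  · unfold InTree.peakMemory
    exact Finset.sup_le (fun b _ => memBound n δ hδ b)
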